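/- Let ⟨r_n⟩_{n=1}^∞ be a sequence in ℕ and let 𝒰 = ⋃_{n=1}^∞ P_n(^{r_n}ℕ). Then: (i) there is a family ⟨B_α⟩_{α < 2^{ℵ₀}} of infinite subsets of 𝒰 with B_α ∩ B_β finite whenever α ≠ β, such that for each α < 2^{ℵ₀} and each L ∈ 𝒰 there exist L′ ∈ B_α and a ∈ ℕ with L′ = L + a; and (ii) there is a countably infinite family of pairwise disjoint infinite subsets of 𝒰 with the same property, namely each member B of the family satisfies: for every L ∈ 𝒰 there exist L′ ∈ B and a ∈ ℕ with L′ = L + a. -/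

import Mathlib

/- Here the positive integers are encoded inside Lean's `ℕ`: a function
`{1,…,m} → ℕ⁺` of length `m` is encoded as a list of positive naturals of length `m`,
and a member of `P_n(^{r_n}ℕ)` as a finite set of such lists. -/

/-- `L ∈ ⋃_{n=1}^∞ P_n(^{r_n}ℕ)`: for some positive `n`, `L` is a set of `n` sequences of
positive integers of length `r n`. -/
def IsUElem (r : ℕ → ℕ) (L : Finset (List ℕ)) : Prop :=
  ∃ n : ℕ, 0 < n ∧ L.card = n ∧ ∀ l ∈ L, l.length = r n ∧ ∀ x ∈ l, 0 < x

/-- `L + a`, the translate of every function in `L` by `a`. -/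
def listTrans (a : ℕ) (L : Finset (List ℕ)) : Finset (List ℕ) :=
  L.image (List.map (· + a))

namespace Stmt7Aux

def entries (L : Finset (List ℕ)) : Finset ℕ := L.biUnion List.toFinset

noncomputable def minE (L : Finset (List ℕ)) : ℕ :=
  if h : (entries L).Nonempty then (entries L).min' h else 0

lemma entries_listTrans (a : ℕ) (L : Finset (List ℕ)) :
    entries (listTrans a L) = (entries L).image (· + a) := by
  ext x
  simp only [entries, listTrans, Finset.mem_biUnion, Finset.mem_image, List.mem_toFinset,
    List.mem_map]
  constructor
  · rintro ⟨l, ⟨m, hm, rfl⟩, hx⟩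
    rw [List.mem_map] at hx
    obtain ⟨y, hy, rfl⟩ := hx
    exact ⟨y, ⟨m, hm, hy⟩, rfl⟩
  · rintro ⟨y, ⟨m, hm, hy⟩, rfl⟩
    exact ⟨List.map (· + a) m, ⟨m, hm, rfl⟩, List.mem_map.mpr ⟨y, hy, rfl⟩⟩

lemma min'_congr {s t : Finset ℕ} (h : s = t) (hs : s.Nonempty) :
    s.min' hs = t.min' (h ▸ hs) := by subst h; rfl

lemma minE_listTrans (a : ℕ) {L : Finset (List ℕ)} (h : (entries L).Nonempty) :
    minE (listTrans a L) = minE L + a := by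
  have he := entries_listTrans a L
  have h2 : (entries (listTrans a L)).Nonempty := by rw [he]; exact h.image _
  rw [minE, minE, dif_pos h2, dif_pos h, min'_congr he h2]
  exact Finset.min'_image (f := (· + a)) (fun x y hxy => by simpa using Nat.add_le_add_right hxy a) (entries L) _

variable {r : ℕ → ℕ}

lemma entries_nonempty (hr : ∀ n, 0 < n → 0 < r n) {L : Finset (List ℕ)}
    (hL : IsUElem r L) : (entries L).Nonempty := by
  obtain ⟨n, hn, hcard, hall⟩ := hL
  obtain ⟨l, hl⟩ := Finset.card_pos.mp (hcard ▸ hn)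
  obtain ⟨hlen, -⟩ := hall l hl
  have hne : l ≠ [] := by
    intro h
    have := hr n hn
    rw [h] at hlen
    simp at hlen
    omega
  exact ⟨l.head hne, by
    simp only [entries, Finset.mem_biUnion, List.mem_toFinset]
    exact ⟨l, hl, List.head_mem hne⟩⟩

lemma minE_pos (hr : ∀ n, 0 < n → 0 < r n) {L : Finset (List ℕ)}
    (hL : IsUElem r L) : 0 < minE L := by
  have h := entries_nonempty hr hL
  rw [minE, dif_pos h]
  have hm := Finset.min'_mem (entries L) h
  simp only [entries, Finset.mem_biUnion, List.mem_toFinset] at hm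
  obtain ⟨l, hl, hx⟩ := hm
  obtain ⟨n, hn, hcard, hall⟩ := hL
  exact (hall l hl).2 _ hx

lemma isUElem_listTrans (a : ℕ) {L : Finset (List ℕ)} (hL : IsUElem r L) :
    IsUElem r (listTrans a L) := by
  obtain ⟨n, hn, hcard, hall⟩ := hL
  refine ⟨n, hn, ?_, ?_⟩
  · rw [listTrans, Finset.card_image_of_injective _
      (List.map_injective_iff.mpr (fun x y h => by omega)), hcard]
  · rintro l hl
    simp only [listTrans, Finset.mem_image] at hl
    obtain ⟨m, hm, rfl⟩ := hl
    obtain ⟨hlen, hpos⟩ := hall m hm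
    refine ⟨by simpa using hlen, ?_⟩
    intro x hx
    simp only [List.mem_map] at hx
    obtain ⟨y, hy, rfl⟩ := hx
    have := hpos y hy; omega

open Classical in
/-- code of the trace of `α` on `{0,…,n-1}`, paired with `n`. -/
noncomputable def code (α : Set ℕ) (n : ℕ) : ℕ :=
  Nat.pair n (Encodable.encode ((Finset.range n).filter (fun i => i ∈ α)))

noncomputable def Aset (α : Set ℕ) : Set ℕ := Set.range (code α)

lemma code_injective (α : Set ℕ) : Function.Injective (code α) :=
  fun n m h => (Nat.pair_eq_pair.mp h).1

lemma Aset_infinite (α : Set ℕ) : (Aset α).Infinite :=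
  Set.infinite_range_of_injective (code_injective α)

lemma Aset_almost_disjoint {α β : Set ℕ} (h : α ≠ β) : (Aset α ∩ Aset β).Finite := by
  classical
  have : ∃ i, ¬ (i ∈ α ↔ i ∈ β) := by
    by_contra hc
    push_neg at hc
    exact h (Set.ext hc)
  obtain ⟨i, hi⟩ := this
  apply Set.Finite.subset ((Set.finite_Iic i).image (code α))
  rintro x ⟨⟨n, hn⟩, ⟨m, hm⟩⟩
  rw [← hn] at hm ⊢
  obtain ⟨h1, henc⟩ := Nat.pair_eq_pair.mp hm
  subst h1
  have hfilt := Encodable.encode_injective henc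
  refine ⟨m, ?_, rfl⟩
  simp only [Set.mem_Iic]
  by_contra hni
  push_neg at hni
  have := Finset.ext_iff.mp hfilt i
  simp only [Finset.mem_filter, Finset.mem_range] at this
  exact hi (by tauto)

def Dset (k : ℕ) : Set ℕ := Set.range (fun m => Nat.pair k m)

lemma Dset_infinite (k : ℕ) : (Dset k).Infinite :=
  Set.infinite_range_of_injective (fun m m' h => (Nat.pair_eq_pair.mp h).2)

lemma Dset_disjoint {k m : ℕ} (h : k ≠ m) : Disjoint (Dset k) (Dset m) := by
  rw [Set.disjoint_left]
  rintro x ⟨a, rfl⟩ ⟨b, hb⟩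
  exact h ((Nat.pair_eq_pair.mp hb).1).symm

def Bfam (e : ℕ → Finset (List ℕ)) (S : Set ℕ) : Set (Finset (List ℕ)) :=
  { x | ∃ k t, t ∈ S ∧ k < t ∧ minE (e k) < t ∧ x = listTrans (t - minE (e k)) (e k) }

variable (hr : ∀ n, 0 < n → 0 < r n) {e : ℕ → Finset (List ℕ)}
  (he : ∀ k, IsUElem r (e k))

include hr he

lemma mem_Bfam_minE {S : Set ℕ} {x : Finset (List ℕ)} (hx : x ∈ Bfam e S) :
    minE x ∈ S ∧ ∃ k < minE x, minE (e k) < minE x ∧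
      x = listTrans (minE x - minE (e k)) (e k) := by
  obtain ⟨k, t, htS, hkt, hmt, rfl⟩ := hx
  have hmin : minE (listTrans (t - minE (e k)) (e k)) = t := by
    rw [minE_listTrans _ (entries_nonempty hr (he k))]; omega
  rw [hmin]
  exact ⟨htS, k, hkt, hmt, rfl⟩

lemma Bfam_subset {S : Set ℕ} : Bfam e S ⊆ {L | IsUElem r L} := by
  rintro x ⟨k, t, -, -, -, rfl⟩
  exact isUElem_listTrans _ (he k)

lemma Bfam_infinite {S : Set ℕ} (hS : S.Infinite) : (Bfam e S).Infinite := by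
  have hS0 : (S \ Set.Iic (minE (e 0))).Infinite := hS.diff (Set.finite_Iic _)
  have hsub : (fun t => listTrans (t - minE (e 0)) (e 0)) '' (S \ Set.Iic (minE (e 0)))
      ⊆ Bfam e S := by
    rintro x ⟨t, ⟨htS, htI⟩, rfl⟩
    simp only [Set.mem_Iic, not_le] at htI
    have h0 := minE_pos hr (he 0)
    exact ⟨0, t, htS, by omega, htI, rfl⟩
  refine Set.Infinite.mono hsub (Set.Infinite.image ?_ hS0)
  intro s hs t ht hst
  have h1 : minE (listTrans (s - minE (e 0)) (e 0)) = s := by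
    simp only [Set.mem_diff, Set.mem_Iic, not_le] at hs
    rw [minE_listTrans _ (entries_nonempty hr (he 0))]; omega
  have h2 : minE (listTrans (t - minE (e 0)) (e 0)) = t := by
    simp only [Set.mem_diff, Set.mem_Iic, not_le] at ht
    rw [minE_listTrans _ (entries_nonempty hr (he 0))]; omega
  simpa only [h1, h2] using congrArg minE hst

lemma Bfam_almost_disjoint {S S' : Set ℕ} (h : (S ∩ S').Finite) :
    (Bfam e S ∩ Bfam e S').Finite := by
  have hsub : Bfam e S ∩ Bfam e S' ⊆
      ⋃ t ∈ S ∩ S', (fun k => listTrans (t - minE (e k)) (e k)) '' Set.Iio t := by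
    rintro x ⟨hx1, hx2⟩
    obtain ⟨ht1, k, hk, hmk, hxe⟩ := mem_Bfam_minE hr he hx1
    obtain ⟨ht2, -⟩ := mem_Bfam_minE hr he hx2
    simp only [Set.mem_iUnion]
    exact ⟨minE x, ⟨ht1, ht2⟩, k, hk, hxe.symm⟩
  exact Set.Finite.subset (h.biUnion fun t _ => (Set.finite_Iio t).image _) hsub

lemma Bfam_disjoint {S S' : Set ℕ} (h : Disjoint S S') :
    Disjoint (Bfam e S) (Bfam e S') := by
  rw [Set.disjoint_left]
  intro x hx1 hx2
  exact Set.disjoint_left.mp h (mem_Bfam_minE hr he hx1).1 (mem_Bfam_minE hr he hx2).1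

lemma Bfam_covers (hsurj : ∀ L, IsUElem r L → ∃ k, e k = L) {S : Set ℕ} (hS : S.Infinite) :
    ∀ L, IsUElem r L → ∃ L' ∈ Bfam e S, ∃ a : ℕ, 0 < a ∧ L' = listTrans a L := by
  intro L hL
  obtain ⟨k, rfl⟩ := hsurj L hL
  obtain ⟨t, htS, ht⟩ := hS.exists_gt (max k (minE (e k)))
  simp only [max_lt_iff] at ht
  exact ⟨listTrans (t - minE (e k)) (e k), ⟨k, t, htS, ht.1, ht.2, rfl⟩,
    t - minE (e k), by omega, rfl⟩

end Stmt7Aux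

/-- Let `⟨r_n⟩_{n=1}^∞` be a sequence of positive integers and let
`𝒰 = ⋃_{n=1}^∞ P_n(^{r_n}ℕ)`. (i) There is an almost disjoint family, indexed by `Set ℕ`
(a type of cardinality `2^ℵ₀`), of infinite subsets of `𝒰` each of which contains a
translate of every member of `𝒰`; (ii) there is a countably infinite pairwise disjoint
family of infinite subsets of `𝒰` with the same property. -/

theorem stmt7 (r : ℕ → ℕ) (hr : ∀ n, 0 < n → 0 < r n) :
    (∃ B : Set ℕ → Set (Finset (List ℕ)),
      Function.Injective B ∧
      (∀ α, B α ⊆ {L | IsUElem r L} ∧ (B α).Infinite) ∧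
      (∀ α β, α ≠ β → (B α ∩ B β).Finite) ∧
      (∀ α, ∀ L, IsUElem r L → ∃ L' ∈ B α, ∃ a : ℕ, 0 < a ∧ L' = listTrans a L)) ∧
    (∃ B : ℕ → Set (Finset (List ℕ)),
      (∀ k, B k ⊆ {L | IsUElem r L} ∧ (B k).Infinite) ∧
      (∀ k m, k ≠ m → Disjoint (B k) (B m)) ∧
      (∀ k, ∀ L, IsUElem r L → ∃ L' ∈ B k, ∃ a : ℕ, 0 < a ∧ L' = listTrans a L)) := by
  open Stmt7Aux in
  have hne : ({L | IsUElem r L} : Set (Finset (List ℕ))).Nonempty := by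
    refine ⟨{List.replicate (r 1) 1}, 1, one_pos, by simp, ?_⟩
    intro l hl
    simp only [Finset.mem_singleton] at hl
    subst hl
    exact ⟨List.length_replicate, fun x hx => by
      rw [List.eq_of_mem_replicate hx]; exact one_pos⟩
  obtain ⟨e, hrange⟩ := (Set.to_countable {L | IsUElem r L}).exists_eq_range hne
  have he : ∀ k, IsUElem r (e k) := fun k => by
    have : e k ∈ {L | IsUElem r L} := hrange ▸ Set.mem_range_self k
    exact this
  have hsurj : ∀ L, IsUElem r L → ∃ k, e k = L := fun L hL => by
    have : L ∈ Set.range e := hrange ▸ hL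
    exact this
  constructor
  · refine ⟨fun α => Stmt7Aux.Bfam e (Stmt7Aux.Aset α), ?_, ?_, ?_, ?_⟩
    · intro α β hEq
      by_contra hab
      have hinf : ((Stmt7Aux.Aset α \ (Stmt7Aux.Aset α ∩ Stmt7Aux.Aset β))
          \ Set.Iic (Stmt7Aux.minE (e 0))).Infinite :=
        ((Stmt7Aux.Aset_infinite α).diff (Stmt7Aux.Aset_almost_disjoint hab)).diff
          (Set.finite_Iic _)
      obtain ⟨t, ht⟩ := hinf.nonempty
      obtain ⟨⟨htα, htβ⟩, htm⟩ := ht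
      simp only [Set.mem_Iic, not_le] at htm
      have htβ' : t ∉ Stmt7Aux.Aset β := fun hb => htβ ⟨htα, hb⟩
      have hx : listTrans (t - Stmt7Aux.minE (e 0)) (e 0) ∈
          Stmt7Aux.Bfam e (Stmt7Aux.Aset α) := by
        have h0 := Stmt7Aux.minE_pos hr (he 0)
        exact ⟨0, t, htα, by omega, htm, rfl⟩
      have hEq' : Stmt7Aux.Bfam e (Stmt7Aux.Aset α) = Stmt7Aux.Bfam e (Stmt7Aux.Aset β) := hEq
      rw [hEq'] at hx
      have hmem := (Stmt7Aux.mem_Bfam_minE hr he hx).1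
      rw [Stmt7Aux.minE_listTrans _ (Stmt7Aux.entries_nonempty hr (he 0))] at hmem
      rw [Nat.add_sub_cancel' (le_of_lt htm)] at hmem
      exact htβ' hmem
    · exact fun α => ⟨Stmt7Aux.Bfam_subset hr he,
        Stmt7Aux.Bfam_infinite hr he (Stmt7Aux.Aset_infinite α)⟩
    · exact fun α β hab =>
        Stmt7Aux.Bfam_almost_disjoint hr he (Stmt7Aux.Aset_almost_disjoint hab)
    · exact fun α => Stmt7Aux.Bfam_covers hr he hsurj (Stmt7Aux.Aset_infinite α)
  · refine ⟨fun k => Stmt7Aux.Bfam e (Stmt7Aux.Dset k), ?_, ?_, ?_⟩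
    · exact fun k => ⟨Stmt7Aux.Bfam_subset hr he,
        Stmt7Aux.Bfam_infinite hr he (Stmt7Aux.Dset_infinite k)⟩
    · exact fun k m hkm => Stmt7Aux.Bfam_disjoint hr he (Stmt7Aux.Dset_disjoint hkm)
    · exact fun k => Stmt7Aux.Bfam_covers hr he hsurj (Stmt7Aux.Dset_infinite k)
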